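/- Let f : ℝ^m → ℝ be C¹, let α, β ∈ (0,1), δ₀ > 0, and let (x_n) be the backtracking gradient descent sequence from an arbitrary initial point x₀ ∈ ℝ^m. If x_∞ is a cluster point of (x_n), then ∇f(x_∞) = 0. -/

import Mathlib

open Gradient Filter Asymptotics RealInnerProductSpace Topology

/-- Armijo's condition at `x` for step size `δ`:
`f(x − δ∇f(x)) − f(x) ≤ −αδ‖∇f(x)‖²`. -/
def ArmijoCondition {E : Type*} [NormedAddCommGroup E] [InnerProductSpace ℝ E]
    [CompleteSpace E] (f : E → ℝ) (α δ : ℝ) (x : E) : Prop :=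
  f (x - δ • ∇ f x) - f x ≤ -(α * δ * ‖∇ f x‖ ^ 2)

/-- `δsel` is the backtracking learning rate function: `δsel x` is the largest number of the
form `β^j δ₀` (i.e. the one with the smallest exponent `j`) satisfying Armijo's condition
at `x`. -/
def IsBacktrackingRate {E : Type*} [NormedAddCommGroup E] [InnerProductSpace ℝ E]
    [CompleteSpace E] (f : E → ℝ) (α β δ₀ : ℝ) (δsel : E → ℝ) : Prop :=
  ∀ x : E, ∃ j : ℕ, δsel x = β ^ j * δ₀ ∧ ArmijoCondition f α (δsel x) x ∧
    ∀ i < j, ¬ ArmijoCondition f α (β ^ i * δ₀) x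

theorem backtracking_GD_cluster_point_is_critical
    {m : ℕ} (f : EuclideanSpace ℝ (Fin m) → ℝ) (hf : ContDiff ℝ 1 f)
    (α β δ₀ : ℝ) (hα0 : 0 < α) (hα1 : α < 1) (hβ0 : 0 < β) (hβ1 : β < 1) (hδ₀ : 0 < δ₀)
    (δsel : EuclideanSpace ℝ (Fin m) → ℝ) (hδsel : IsBacktrackingRate f α β δ₀ δsel)
    (x : ℕ → EuclideanSpace ℝ (Fin m))
    (hupd : ∀ n, x (n + 1) = x n - δsel (x n) • ∇ f (x n))
    (xlim : EuclideanSpace ℝ (Fin m)) (hcl : MapClusterPt xlim Filter.atTop x) :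
    ∇ f xlim = 0 := by
  classical
  by_contra hG
  -- continuity of the gradient
  have hgcont : Continuous (∇ f) := by
    have h1 : Continuous (fderiv ℝ f) := hf.continuous_fderiv one_ne_zero
    exact (InnerProductSpace.toDual ℝ (EuclideanSpace ℝ (Fin m))).symm.continuous.comp h1
  -- fderiv applied equals inner product with the gradient
  have hfd : ∀ (y v : EuclideanSpace ℝ (Fin m)), fderiv ℝ f y v = ⟪∇ f y, v⟫ := by
    intro y v
    have h : (InnerProductSpace.toDual ℝ (EuclideanSpace ℝ (Fin m))) (∇ f y) = fderiv ℝ f y := by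
      simp [gradient]
    rw [← h, InnerProductSpace.toDual_apply_apply]
  -- positivity of step sizes
  have hδpos : ∀ y, 0 < δsel y := by
    intro y
    obtain ⟨j, hj, -, -⟩ := hδsel y
    rw [hj]; positivity
  -- decrease
  have hdec : ∀ n, f (x (n + 1)) ≤ f (x n) - α * δsel (x n) * ‖∇ f (x n)‖ ^ 2 := by
    intro n
    obtain ⟨j, -, harm, -⟩ := hδsel (x n)
    rw [hupd n]
    unfold ArmijoCondition at harm
    linarith
  have hstep_nonneg : ∀ n, 0 ≤ α * δsel (x n) * ‖∇ f (x n)‖ ^ 2 := by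
    intro n
    have := (hδpos (x n)).le
    positivity
  have hanti : Antitone fun n => f (x n) := by
    apply antitone_nat_of_succ_le
    intro n
    have h1 := hdec n
    have h2 := hstep_nonneg n
    linarith
  -- subsequence
  obtain ⟨φ, hφ, hφt⟩ := TopologicalSpace.FirstCountableTopology.tendsto_subseq hcl
  have hfsub : Tendsto (fun k => f (x (φ k))) atTop (𝓝 (f xlim)) :=
    (hf.continuous.tendsto xlim).comp hφt
  have hftend : Tendsto (fun n => f (x n)) atTop (𝓝 (f xlim)) := by
    rcases tendsto_of_antitone hanti with h | ⟨l, hl⟩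
    · exact absurd hfsub (not_tendsto_nhds_of_tendsto_atBot
        (h.comp hφ.tendsto_atTop) _)
    · have h2 : Tendsto (fun k => f (x (φ k))) atTop (𝓝 l) := hl.comp hφ.tendsto_atTop
      rwa [tendsto_nhds_unique hfsub h2]
  -- δ * ‖∇f‖² → 0
  have hdg0 : Tendsto (fun n => δsel (x n) * ‖∇ f (x n)‖ ^ 2) atTop (𝓝 0) := by
    have h1 : Tendsto (fun n => f (x n) - f (x (n + 1))) atTop (𝓝 0) := by
      have := hftend.sub (hftend.comp (tendsto_add_atTop_nat 1))
      simpa using this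
    have h2 : Tendsto (fun n => (f (x n) - f (x (n + 1))) / α) atTop (𝓝 0) := by
      simpa using h1.div_const α
    refine tendsto_of_tendsto_of_tendsto_of_le_of_le tendsto_const_nhds h2
      (fun n => ?_) (fun n => ?_)
    · have := (hδpos (x n)).le; positivity
    · rw [le_div_iff₀ hα0]
      have := hdec n; linarith
  -- notation along the subsequence
  set y : ℕ → EuclideanSpace ℝ (Fin m) := fun k => x (φ k) with hy
  have hyt : Tendsto y atTop (𝓝 xlim) := hφt
  have hdg0' : Tendsto (fun k => δsel (y k) * ‖∇ f (y k)‖ ^ 2) atTop (𝓝 0) :=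
    hdg0.comp hφ.tendsto_atTop
  have hgk : Tendsto (fun k => ∇ f (y k)) atTop (𝓝 (∇ f xlim)) :=
    (hgcont.tendsto xlim).comp hyt
  have hnk : Tendsto (fun k => ‖∇ f (y k)‖ ^ 2) atTop (𝓝 (‖∇ f xlim‖ ^ 2)) :=
    hgk.norm.pow 2
  have hGn : 0 < ‖∇ f xlim‖ := norm_pos_iff.2 hG
  have hGpos : 0 < ‖∇ f xlim‖ ^ 2 := by positivity
  -- δsel (y k) → 0
  have hδ0 : Tendsto (fun k => δsel (y k)) atTop (𝓝 0) := by
    have hdiv : Tendsto (fun k => δsel (y k) * ‖∇ f (y k)‖ ^ 2 / ‖∇ f (y k)‖ ^ 2)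
        atTop (𝓝 (0 / ‖∇ f xlim‖ ^ 2)) := hdg0'.div hnk hGpos.ne'
    rw [zero_div] at hdiv
    have hev : ∀ᶠ k in atTop,
        δsel (y k) * ‖∇ f (y k)‖ ^ 2 / ‖∇ f (y k)‖ ^ 2 = δsel (y k) := by
      filter_upwards [(tendsto_const_nhds (x := (0:ℝ))).eventually_lt hnk hGpos] with k hk
      exact mul_div_cancel_right₀ _ (ne_of_gt hk)
    exact hdiv.congr' hev
  -- eventually δsel (y k) < δ₀, so Armijo fails at δsel (y k) / β
  have hfail : ∀ᶠ k in atTop, ¬ ArmijoCondition f α (δsel (y k) / β) (y k) := by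
    filter_upwards [hδ0.eventually_lt tendsto_const_nhds hδ₀] with k hk
    obtain ⟨j, hj, -, hmin⟩ := hδsel (y k)
    match j, hj, hmin with
    | 0, hj, hmin => rw [hj] at hk; simp at hk
    | j + 1, hj, hmin =>
      have heq : δsel (y k) / β = β ^ j * δ₀ := by
        rw [hj, pow_succ, mul_comm (β ^ j) β, mul_assoc,
          mul_div_cancel_left₀ _ (ne_of_gt hβ0)]
      rw [heq]
      exact hmin j (Nat.lt_succ_self j)
  set δ' : ℕ → ℝ := fun k => δsel (y k) / β with hδ'def
  have hδ'pos : ∀ k, 0 < δ' k := fun k => div_pos (hδpos (y k)) hβ0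
  have hδ'0 : Tendsto δ' atTop (𝓝 0) := by
    simpa using hδ0.div_const β
  -- the trial points z k → xlim
  set z : ℕ → EuclideanSpace ℝ (Fin m) := fun k => y k - δ' k • ∇ f (y k) with hzdef
  have hzt : Tendsto z atTop (𝓝 xlim) := by
    have hsm : Tendsto (fun k => δ' k • ∇ f (y k)) atTop (𝓝 ((0:ℝ) • ∇ f xlim)) :=
      hδ'0.smul hgk
    rw [zero_smul] at hsm
    simpa using hyt.sub hsm
  -- strict differentiability at xlim
  have hstrict : HasStrictFDerivAt f (fderiv ℝ f xlim) xlim :=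
    hf.contDiffAt.hasStrictFDerivAt one_ne_zero
  have hpair : Tendsto (fun k => (y k, z k)) atTop (𝓝 (xlim, xlim)) :=
    hyt.prodMk_nhds hzt
  have hlo : (fun k => f (y k) - f (z k) - fderiv ℝ f xlim (y k - z k)) =o[atTop]
      (fun k => y k - z k) := hstrict.isLittleO.comp_tendsto hpair
  -- choose c
  set c : ℝ := (1 - α) * ‖∇ f xlim‖ / 2 with hcdef
  have hcpos : 0 < c := by
    rw [hcdef]
    have : 0 < 1 - α := by linarith
    positivity
  -- the key eventual inequality
  have hev : ∀ᶠ k in atTop,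
      ⟪∇ f xlim, ∇ f (y k)⟫ ≤ α * ‖∇ f (y k)‖ ^ 2 + c * ‖∇ f (y k)‖ := by
    filter_upwards [hfail, hlo.def hcpos] with k hk1 hk2
    -- rewrite the little-o bound
    have hyz : y k - z k = δ' k • ∇ f (y k) := sub_sub_cancel _ _
    rw [hyz] at hk2
    have hfdk : fderiv ℝ f xlim (δ' k • ∇ f (y k)) =
        δ' k * ⟪∇ f xlim, ∇ f (y k)⟫ := by
      rw [map_smul, hfd]
      simp
    have hnorm : ‖δ' k • ∇ f (y k)‖ = δ' k * ‖∇ f (y k)‖ := by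
      rw [norm_smul, Real.norm_eq_abs, abs_of_pos (hδ'pos k)]
    rw [hfdk, hnorm] at hk2
    have habs : |f (y k) - f (z k) - δ' k * ⟪∇ f xlim, ∇ f (y k)⟫| ≤
        c * (δ' k * ‖∇ f (y k)‖) := by
      simpa [Real.norm_eq_abs] using hk2
    -- failed Armijo
    unfold ArmijoCondition at hk1
    push_neg at hk1
    have hk1' : f (y k) - f (z k) < α * δ' k * ‖∇ f (y k)‖ ^ 2 := by
      have : z k = y k - (δsel (y k) / β) • ∇ f (y k) := rfl
      rw [this]
      have := hk1
      linarith [hk1]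
    have hlow : δ' k * ⟪∇ f xlim, ∇ f (y k)⟫ - c * (δ' k * ‖∇ f (y k)‖) ≤
        f (y k) - f (z k) := by
      have := abs_le.1 habs
      linarith [this.1]
    have hmul : δ' k * ⟪∇ f xlim, ∇ f (y k)⟫ ≤
        δ' k * (α * ‖∇ f (y k)‖ ^ 2 + c * ‖∇ f (y k)‖) := by
      nlinarith [hδ'pos k]
    exact le_of_mul_le_mul_left (by linarith [hmul]) (hδ'pos k)
  -- take limits
  have hlhs : Tendsto (fun k => ⟪∇ f xlim, ∇ f (y k)⟫) atTop
      (𝓝 ⟪∇ f xlim, ∇ f xlim⟫) := tendsto_const_nhds.inner hgk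
  have hrhs : Tendsto (fun k => α * ‖∇ f (y k)‖ ^ 2 + c * ‖∇ f (y k)‖) atTop
      (𝓝 (α * ‖∇ f xlim‖ ^ 2 + c * ‖∇ f xlim‖)) :=
    (hnk.const_mul α).add (hgk.norm.const_mul c)
  have hfin := le_of_tendsto_of_tendsto hlhs hrhs hev
  rw [real_inner_self_eq_norm_sq] at hfin
  rw [hcdef] at hfin
  nlinarith [hGn, sq_nonneg (‖∇ f xlim‖)]
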